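/- Define u₀ : [0,∞) → ℝ by u₀(s) = tanh(s) · ∫₀^s tanh(t)⁻² (∫₀^t tanh²(r) dr) dt for s > 0 and u₀(0) = 0. Then u₀''(s) + 2 cosh⁻²(s) u₀(s) = tanh(s) for all s > 0, and u₀ satisfies the quadratic growth bound |u₀(s)| ≤ 1 + s² for all s ≥ 0. -/

import Mathlib

open Real

lemma tanh_fun_eq : Real.tanh = fun y => Real.sinh y / Real.cosh y :=
  funext Real.tanh_eq_sinh_div_cosh

lemma continuous_tanh' : Continuous Real.tanh := by
  rw [tanh_fun_eq]
  exact Real.continuous_sinh.div Real.continuous_cosh fun x => (Real.cosh_pos x).ne'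

lemma my_hasDerivAt_tanh (x : ℝ) : HasDerivAt Real.tanh ((Real.cosh x ^ 2)⁻¹) x := by
  have h := (Real.hasDerivAt_sinh x).div (Real.hasDerivAt_cosh x) (Real.cosh_pos x).ne'
  have e : (Real.cosh x * Real.cosh x - Real.sinh x * Real.sinh x) / Real.cosh x ^ 2
      = (Real.cosh x ^ 2)⁻¹ := by
    rw [show Real.cosh x * Real.cosh x - Real.sinh x * Real.sinh x
      = Real.cosh x ^2 - Real.sinh x ^2 by ring, Real.cosh_sq_sub_sinh_sq]
    simp
  rw [e] at h
  rw [tanh_fun_eq]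
  exact h

lemma tanh_sq (x : ℝ) : Real.tanh x ^ 2 = 1 - (Real.cosh x ^2)⁻¹ := by
  rw [Real.tanh_eq_sinh_div_cosh]
  have h := Real.cosh_sq_sub_sinh_sq x
  have hc := (Real.cosh_pos x).ne'
  field_simp
  nlinarith [h]

lemma inner_int (t : ℝ) : (∫ r in (0:ℝ)..t, (Real.tanh r)^2) = t - Real.tanh t := by
  have h : ∀ r ∈ Set.uIcc (0:ℝ) t, HasDerivAt (fun y => y - Real.tanh y) ((Real.tanh r)^2) r := by
    intro r _
    have := (hasDerivAt_id r).sub (my_hasDerivAt_tanh r)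
    simpa [tanh_sq, Pi.sub_def] using this
  rw [intervalIntegral.integral_eq_sub_of_hasDerivAt h
    ((continuous_tanh'.pow 2).intervalIntegrable 0 t)]
  simp

noncomputable def g (t : ℝ) : ℝ := ((Real.tanh t)^2)⁻¹ * (t - Real.tanh t)
noncomputable def H (t : ℝ) : ℝ := t^2/2 + (Real.sinh t - t * Real.cosh t) / Real.sinh t

lemma tanh_pos' {t : ℝ} (ht : 0 < t) : 0 < Real.tanh t := by
  rw [Real.tanh_eq_sinh_div_cosh]
  exact div_pos (by rwa [Real.sinh_pos_iff]) (Real.cosh_pos t)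

lemma sub_tanh_nonneg {t : ℝ} (ht : 0 ≤ t) : 0 ≤ t - Real.tanh t := by
  rw [← inner_int]
  apply intervalIntegral.integral_nonneg ht
  intro x _; positivity

lemma sub_tanh_le {t : ℝ} (ht : 0 < t) : t - Real.tanh t ≤ t * Real.tanh t ^ 2 := by
  have hs : t < Real.sinh t := Real.self_lt_sinh_iff.mpr ht
  have hc : 1 ≤ Real.cosh t := Real.one_le_cosh t
  have hc0 : (0:ℝ) < Real.cosh t := Real.cosh_pos t
  have key : t ≤ Real.sinh t * Real.cosh t :=
    le_trans hs.le (le_mul_of_one_le_right (by linarith) hc)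
  have hsq := Real.cosh_sq_sub_sinh_sq t
  rw [Real.tanh_eq_sinh_div_cosh]
  have h : t * Real.cosh t^2 - Real.sinh t * Real.cosh t ≤ t * Real.sinh t^2 := by
    nlinarith [key, hsq]
  calc t - Real.sinh t / Real.cosh t
      = (t * Real.cosh t^2 - Real.sinh t * Real.cosh t)/Real.cosh t^2 := by
        field_simp
    _ ≤ t * Real.sinh t^2 / Real.cosh t^2 := by gcongr
    _ = t * (Real.sinh t/Real.cosh t)^2 := by rw [div_pow]; ring

lemma g_bounds {t : ℝ} (ht : 0 < t) : 0 ≤ g t ∧ g t ≤ t := by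
  have h1 := tanh_pos' ht
  have h2 := sub_tanh_nonneg ht.le
  have h3 := sub_tanh_le ht
  constructor
  · exact mul_nonneg (by positivity) h2
  · rw [g, inv_mul_le_iff₀ (by positivity)]
    linarith [h3]

lemma g_intble {s : ℝ} (hs : 0 < s) : IntervalIntegrable g MeasureTheory.volume 0 s := by
  rw [intervalIntegrable_iff, Set.uIoc_of_le hs.le]
  apply MeasureTheory.Measure.integrableOn_of_bounded (M := s) (by simp)
  · exact (((continuous_tanh'.pow 2).measurable.inv).mul
      (measurable_id.sub continuous_tanh'.measurable)).aestronglyMeasurable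
  · filter_upwards [MeasureTheory.ae_restrict_mem measurableSet_Ioc] with x hx
    have := g_bounds hx.1
    rw [Real.norm_eq_abs, abs_of_nonneg this.1]
    exact this.2.trans hx.2

lemma H_deriv {t : ℝ} (ht : 0 < t) : HasDerivAt H (g t) t := by
  have hs0 : Real.sinh t ≠ 0 := (Real.sinh_pos_iff.mpr ht).ne'
  have hc0 : Real.cosh t ≠ 0 := (Real.cosh_pos t).ne'
  have hth : Real.tanh t ≠ 0 := (tanh_pos' ht).ne'
  have h1 : HasDerivAt (fun y : ℝ => y^2/2) t t := by
    simpa using (hasDerivAt_pow 2 t).div_const 2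
  have h2 : HasDerivAt (fun y : ℝ => Real.sinh y - y * Real.cosh y)
      (Real.cosh t - (1 * Real.cosh t + t * Real.sinh t)) t :=
    (Real.hasDerivAt_sinh t).sub ((hasDerivAt_id t).mul (Real.hasDerivAt_cosh t))
  have h3 := h2.div (Real.hasDerivAt_sinh t) hs0
  have h4 := h1.add h3
  convert h4 using 1
  · rfl
  · rfl
  · rfl
  rw [g, Real.tanh_eq_sinh_div_cosh]
  field_simp
  ring

lemma sinh_ne {t : ℝ} (ht : t ≠ 0) : Real.sinh t ≠ 0 := by
  simpa using (Real.sinh_eq_zero .. ).not.mpr ht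

lemma H_cont {s : ℝ} (hs : 0 < s) : ContinuousOn H (Set.Icc 0 s) := by
  intro t ht
  rcases eq_or_ne t 0 with rfl | ht0
  · rw [← continuousWithinAt_diff_self]
    have hH0 : H 0 = 0 := by simp [H]
    rw [ContinuousWithinAt, hH0]
    have hslope : Filter.Tendsto (fun y => Real.sinh y / y) (nhdsWithin 0 {(0:ℝ)}ᶜ) (nhds 1) := by
      have := hasDerivAt_iff_tendsto_slope.mp (Real.hasDerivAt_sinh 0)
      simpa [slope_fun_def, Real.sinh_zero, Real.cosh_zero, div_eq_inv_mul] using this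
    have htt : Filter.Tendsto (fun y => y / Real.sinh y) (nhdsWithin 0 {(0:ℝ)}ᶜ) (nhds 1) := by
      simpa [inv_div] using hslope.inv₀ one_ne_zero
    have hcosh : Filter.Tendsto Real.cosh (nhdsWithin 0 {(0:ℝ)}ᶜ) (nhds 1) := by
      simpa [Real.cosh_zero] using (Real.continuous_cosh.tendsto 0).mono_left nhdsWithin_le_nhds
    have hsq : Filter.Tendsto (fun y : ℝ => y^2/2) (nhdsWithin 0 {(0:ℝ)}ᶜ) (nhds 0) := by
      have : Continuous (fun y : ℝ => y^2/2) := by continuity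
      simpa using (this.tendsto 0).mono_left nhdsWithin_le_nhds
    have hφ : Filter.Tendsto (fun y => y^2/2 + (1 - Real.cosh y * (y / Real.sinh y)))
        (nhdsWithin 0 {(0:ℝ)}ᶜ) (nhds 0) := by
      have := hsq.add ((tendsto_const_nhds (x := (1:ℝ))).sub (hcosh.mul htt))
      simpa using this
    have hEq : ∀ y ∈ ({(0:ℝ)}ᶜ : Set ℝ),
        H y = y^2/2 + (1 - Real.cosh y * (y / Real.sinh y)) := by
      intro y hy
      have hy0 : y ≠ 0 := hy
      have := sinh_ne hy0
      rw [H]; field_simp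
    have : Filter.Tendsto H (nhdsWithin 0 {(0:ℝ)}ᶜ) (nhds 0) := by
      apply hφ.congr'
      filter_upwards [self_mem_nhdsWithin] with y hy
      exact (hEq y hy).symm
    exact this.mono_left (nhdsWithin_mono 0 (by intro x hx; exact hx.2))
  · have hs0 := sinh_ne ht0
    apply ContinuousAt.continuousWithinAt
    exact (continuousAt_id.pow 2 |>.div_const 2).add
      (((Real.continuous_sinh.continuousAt).sub
        (continuousAt_id.mul Real.continuous_cosh.continuousAt)).div
        Real.continuous_sinh.continuousAt hs0)

lemma outer_int {s : ℝ} (hs : 0 < s) : (∫ t in (0:ℝ)..s, g t) = H s := by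
  rw [intervalIntegral.integral_eq_sub_of_hasDeriv_right_of_le hs.le (H_cont hs)
    (fun t ht => (H_deriv ht.1).hasDerivWithinAt) (g_intble hs)]
  simp [H]

noncomputable def Cf (s : ℝ) : ℝ := (s^2/2 + 1) * Real.tanh s - s
noncomputable def C1 (s : ℝ) : ℝ := s * Real.tanh s + (s^2/2 + 1) * (Real.cosh s ^2)⁻¹ - 1
noncomputable def C2 (s : ℝ) : ℝ :=
  (1 * Real.tanh s + s * (Real.cosh s ^2)⁻¹)
    + ((s * (Real.cosh s ^2)⁻¹)
      + (s^2/2 + 1) * (-(2 * Real.cosh s ^1 * Real.sinh s) / (Real.cosh s ^2)^2))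

lemma closed_form {s : ℝ} (hs : 0 < s) :
    Real.tanh s * (∫ t in (0:ℝ)..s, ((Real.tanh t)^2)⁻¹ * ∫ r in (0:ℝ)..t, (Real.tanh r)^2)
      = Cf s := by
  have he : (fun t => ((Real.tanh t)^2)⁻¹ * ∫ r in (0:ℝ)..t, (Real.tanh r)^2) = g := by
    funext t; rw [inner_int]; rfl
  rw [he, outer_int hs, H, Cf, Real.tanh_eq_sinh_div_cosh]
  have h1 := sinh_ne hs.ne'
  have h2 := (Real.cosh_pos s).ne'
  field_simp
  ring

lemma Cf_deriv (s : ℝ) : HasDerivAt Cf (C1 s) s := by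
  have h := ((((hasDerivAt_pow 2 s).div_const 2).add_const 1).mul
    (my_hasDerivAt_tanh s)).sub (hasDerivAt_id s)
  convert h using 1
  · rfl
  · rfl
  · rfl
  rw [C1]; push_cast; ring

lemma C1_deriv (s : ℝ) : HasDerivAt C1 (C2 s) s := by
  have hc : Real.cosh s ^ 2 ≠ 0 := by positivity
  have h1 := (hasDerivAt_id s).mul (my_hasDerivAt_tanh s)
  have h2inner := ((Real.hasDerivAt_cosh s).pow 2).inv hc
  have h2 := (((hasDerivAt_pow 2 s).div_const 2).add_const 1).mul h2inner
  have h := (h1.add h2).sub_const 1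
  convert h using 1
  · rfl
  · rfl
  · rfl
  rw [C2]; push_cast; simp only [id_eq, Pi.pow_apply, Pi.inv_apply]; ring

lemma ode_identity (s : ℝ) : C2 s + 2 * ((Real.cosh s)^2)⁻¹ * Cf s = Real.tanh s := by
  have hc := (Real.cosh_pos s).ne'
  rw [C2, Cf, Real.tanh_eq_sinh_div_cosh]
  field_simp
  ring

lemma tanh_le_one' (s : ℝ) : Real.tanh s ≤ 1 := by
  rw [Real.tanh_eq_sinh_div_cosh, div_le_one (Real.cosh_pos s)]
  nlinarith [Real.cosh_sub_sinh s, Real.exp_pos (-s)]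

lemma Cf_growth {s : ℝ} (hs : 0 < s) : |Cf s| ≤ 1 + s^2 := by
  have h0 : 0 ≤ Real.tanh s := (tanh_pos' hs).le
  have h1 : Real.tanh s ≤ 1 := tanh_le_one' s
  rw [Cf, abs_le]
  constructor
  · nlinarith [mul_nonneg (show (0:ℝ) ≤ s^2/2+1 by positivity) h0, sq_nonneg (s-1)]
  · nlinarith [mul_le_mul_of_nonneg_left h1 (show (0:ℝ) ≤ s^2/2+1 by positivity)]

/-- The particular solution `u₀` of `L̃ u = tanh` obtained by variation of parameters
with zero Dirichlet condition at `s = 0` satisfies the ODE on `(0,∞)` and the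
quadratic growth bound `|u₀(s)| ≤ 1 + s²` for `s ≥ 0`. -/
theorem u_zero_solves_and_grows_quadratically :
    let u₀ : ℝ → ℝ := fun s =>
      Real.tanh s *
        ∫ t in (0:ℝ)..s, ((Real.tanh t)^2)⁻¹ * ∫ r in (0:ℝ)..t, (Real.tanh r)^2
    (∀ s > (0:ℝ),
      deriv (deriv u₀) s + 2 * ((Real.cosh s)^2)⁻¹ * u₀ s = Real.tanh s) ∧
    (∀ s ≥ (0:ℝ), |u₀ s| ≤ 1 + s^2) := by
  intro u₀
  have key : ∀ x > (0:ℝ), u₀ x = Cf x := fun x hx => closed_form hx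
  constructor
  · intro s hs
    have hev : u₀ =ᶠ[nhds s] Cf := by
      filter_upwards [Ioi_mem_nhds hs] with x hx
      exact key x hx
    have h2 : deriv (deriv u₀) s = deriv (deriv Cf) s := (hev.deriv).deriv_eq
    rw [h2, key s hs, show deriv Cf = C1 from funext fun x => (Cf_deriv x).deriv,
      (C1_deriv s).deriv]
    exact ode_identity s
  · intro s hs
    rcases eq_or_lt_of_le hs with h | h
    · show |Real.tanh s * _| ≤ _
      rw [← h]
      simp
    · rw [key s h]
      exact Cf_growth h
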